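/- Let z ∈ 𝕊 have infinite order and let a ∈ 𝕊, a ≠ 1, have finite order. Then the supremum topology 𝒯_z ∨ 𝒯_{az} on ℤ^(ℕ) is not compatible with the topology τ of A_G(s): there exists a group homomorphism χ : ℤ^(ℕ) → 𝕊 that is continuous for 𝒯_z ∨ 𝒯_{az} but not continuous for τ. -/

import Mathlib

open Filter Topology

noncomputable section

/-- `𝕊₊ = {z ∈ 𝕊 : Re z ≥ 0}`. -/
def SPlus : Set Circle := {z : Circle | 0 ≤ (z : ℂ).re}

/-- A character of an abelian group `G` is a homomorphism `G → 𝕊`. -/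
def IsChar {G : Type*} [AddCommGroup G] (χ : G → Circle) : Prop :=
  ∀ x y : G, χ (x + y) = χ x * χ y

/-- Two topologies on an abelian group `G` are *compatible* if they have the same
continuous characters `G → 𝕊`. -/
def Compatible {G : Type*} [AddCommGroup G] (t₁ t₂ : TopologicalSpace G) : Prop :=
  ∀ χ : G → Circle, IsChar χ →
    (@Continuous G Circle t₁ _ χ ↔ @Continuous G Circle t₂ _ χ)

/-- A subset `A` of a topological abelian group is *quasi-convex* if for every `g ∉ A`
there is a continuous character `χ` with `χ(A) ⊆ 𝕊₊` and `χ(g) ∉ 𝕊₊`. -/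
def IsQuasiConvex {G : Type*} [AddCommGroup G] (t : TopologicalSpace G) (A : Set G) : Prop :=
  ∀ g : G, g ∉ A → ∃ χ : G → Circle, IsChar χ ∧ @Continuous G Circle t _ χ ∧
    (∀ a ∈ A, χ a ∈ SPlus) ∧ χ g ∉ SPlus

/-- A topological abelian group is *locally quasi-convex* if it has a neighborhood base
at `0` consisting of quasi-convex sets. -/
def LocallyQuasiConvex {G : Type*} [AddCommGroup G] (t : TopologicalSpace G) : Prop :=
  ∀ U ∈ @nhds G t 0, ∃ V ∈ @nhds G t 0, V ⊆ U ∧ IsQuasiConvex t V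

/-- The convergent sequence `s = {0} ∪ {1/n : n ∈ ℕ}` as a subspace of `ℝ`. -/
def sSet : Set ℝ := {x : ℝ | x = 0 ∨ ∃ n : ℕ, 0 < n ∧ x = 1 / n}

/-- The natural map `s → ℤ^(ℕ)`, sending `0 ↦ 0` and `1/n ↦ e_n = single n 1`. -/
def sMap (x : sSet) : ℕ →₀ ℤ :=
  if (x : ℝ) = 0 then 0 else Finsupp.single ⌈(1 : ℝ) / (x : ℝ)⌉₊ 1

/-- The topology of the Graev free abelian topological group `A_G(s)`, i.e. the finest
group topology on `ℤ^(ℕ)` making `sMap : s → ℤ^(ℕ)` continuous.  In Mathlib's lattice of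
(group) topologies `t ≤ s` means `t` is *finer* than `s`, so the finest such group topology
is the `sInf` of the collection of all group topologies making `sMap` continuous; this
`sInf` itself makes `sMap` continuous, since `Continuous` into `t` means
`coinduced sMap _ ≤ t.toTopologicalSpace`, a condition preserved by `sInf`. -/
def tauGT : AddGroupTopology (ℕ →₀ ℤ) :=
  sInf {t : AddGroupTopology (ℕ →₀ ℤ) | @Continuous _ _ _ t.toTopologicalSpace sMap}

/-- The topology `τ` of `A_G(s)` on `ℤ^(ℕ)`. -/
def tau : TopologicalSpace (ℕ →₀ ℤ) := tauGT.toTopologicalSpace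

/-- `c₀(𝕊) = {(z_n) ∈ 𝕊^ℕ : z_n → 1}` as a subgroup of `𝕊^ℕ`. -/
def c0S : Subgroup (ℕ → Circle) where
  carrier := {u : ℕ → Circle | Tendsto u atTop (nhds 1)}
  one_mem' := tendsto_const_nhds
  mul_mem' := fun hu hv => by simpa [Pi.mul_def] using hu.mul hv
  inv_mem' := fun hu => by simpa [Pi.inv_def] using hu.inv

/-- The group `F₀(𝕊)`: the group `c₀(𝕊)` endowed (below) with the sup-metric
`d((z_n),(w_n)) = sup_n |z_n - w_n|`. -/
def F0 : Type := c0S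

instance : CommGroup F0 := inferInstanceAs (CommGroup c0S)

namespace F0

/-- The underlying sequence of an element of `F₀(𝕊)`. -/
def seq (u : F0) : ℕ → Circle := Subtype.val (p := fun u => u ∈ c0S) u

lemma seq_tendsto (u : F0) : Tendsto u.seq atTop (nhds 1) :=
  (Subtype.prop (p := fun u => u ∈ c0S) u : _)

lemma ext {u v : F0} (h : u.seq = v.seq) : u = v :=
  Subtype.ext (p := fun u => u ∈ c0S) h

/-- Construct an element of `F₀(𝕊)` from a sequence converging to `1`. -/
def mk (u : ℕ → Circle) (hu : Tendsto u atTop (nhds 1)) : F0 :=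
  Subtype.mk (p := fun u => u ∈ c0S) u hu

lemma dist_circle_le (a b : Circle) : dist a b ≤ 2 := by
  have : dist (a : ℂ) (b : ℂ) ≤ ‖(a : ℂ)‖ + ‖(b : ℂ)‖ := by
    rw [dist_eq_norm]; exact norm_sub_le _ _
  have ha : ‖(a : ℂ)‖ = 1 := a.norm_coe
  have hb : ‖(b : ℂ)‖ = 1 := b.norm_coe
  calc dist a b = dist (a : ℂ) (b : ℂ) := rfl
    _ ≤ 2 := by rw [ha, hb] at this; linarith

lemma bddAbove_dist (u v : F0) :
    BddAbove (Set.range fun n => dist (u.seq n) (v.seq n)) := by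
  refine ⟨2, ?_⟩
  rintro x ⟨n, rfl⟩
  exact dist_circle_le _ _

/-- `F₀(𝕊)` endowed with the metric `d((z_n),(w_n)) = sup_n |z_n - w_n|`. -/
instance : MetricSpace F0 where
  dist u v := ⨆ n, dist (u.seq n) (v.seq n)
  dist_self u := by simp
  dist_comm u v := by simp only [dist_comm]
  dist_triangle u v w := by
    refine ciSup_le fun n => ?_
    calc dist (u.seq n) (w.seq n) ≤ dist (u.seq n) (v.seq n) + dist (v.seq n) (w.seq n) :=
          dist_triangle _ _ _
      _ ≤ (⨆ m, dist (u.seq m) (v.seq m)) + ⨆ m, dist (v.seq m) (w.seq m) :=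
          add_le_add (le_ciSup (bddAbove_dist u v) n) (le_ciSup (bddAbove_dist v w) n)
  eq_of_dist_eq_zero := by
    intro u v h
    refine ext (funext fun n => ?_)
    have hn : dist (u.seq n) (v.seq n) ≤ 0 := h ▸ le_ciSup (bddAbove_dist u v) n
    exact eq_of_dist_eq_zero (le_antisymm hn dist_nonneg)

lemma dist_def (u v : F0) : dist u v = ⨆ n, dist (u.seq n) (v.seq n) := rfl

end F0

/-- The monomorphism `T_z : ℤ^(ℕ) → A_G(s) × F₀(𝕊)`, `T_z((n_k)) = ((n_k), (z^{n_k})_k)`. -/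
def Tz (z : Circle) (x : ℕ →₀ ℤ) : (ℕ →₀ ℤ) × F0 :=
  ⟨x, F0.mk (fun k => z ^ (x k)) (by
    have h : ∀ᶠ k in atTop, (1 : Circle) = z ^ (x k) := by
      obtain ⟨N, hN⟩ := x.support.finite_toSet.bddAbove
      filter_upwards [eventually_ge_atTop (N + 1)] with k hk
      have hx : x k = 0 := by
        by_contra hne
        have : k ≤ N := hN (Finsupp.mem_support_iff.mpr hne)
        omega
      simp [hx]
    exact tendsto_const_nhds.congr' h)⟩

/-- The topology `𝒯_z` on `ℤ^(ℕ)` induced from `A_G(s) × F₀(𝕊)` via `T_z`,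
where the first factor carries `τ` and the second the sup-metric topology. -/
def TzTop (z : Circle) : TopologicalSpace (ℕ →₀ ℤ) :=
  TopologicalSpace.induced (Tz z) (@instTopologicalSpaceProd _ _ tau inferInstance)

/- In Mathlib's lattice of topologies `t ≤ s` means `t` is *finer* than `s`; hence the
classical supremum topology `𝒯_z ∨ 𝒯_{az}` (the least (group) topology finer than both,
i.e. the topology generated by the union of the two families of open sets) is the
lattice-theoretic infimum `TzTop z ⊓ TzTop (a * z)` below. -/

lemma circle_dist_mul_right (u v w : Circle) : dist (u * w) (v * w) = dist u v := by
  show dist ((u * w : Circle) : ℂ) ((v * w : Circle) : ℂ) = dist (u : ℂ) (v : ℂ)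
  rw [Complex.dist_eq, Complex.dist_eq, Circle.coe_mul, Circle.coe_mul, ← sub_mul, norm_mul,
    Circle.norm_coe, mul_one]

lemma dist_tz_lt {w : Circle} {x y : ℕ →₀ ℤ} {ε : ℝ}
    (h : dist (Tz w y).2 (Tz w x).2 < ε) (k : ℕ) :
    dist (w ^ (y k - x k)) (1 : Circle) < ε := by
  have h' : (⨆ n, dist ((Tz w y).2.seq n) ((Tz w x).2.seq n)) < ε := by
    rw [← F0.dist_def]; exact h
  have h1 : dist (w ^ (y k)) (w ^ (x k)) < ε :=
    lt_of_le_of_lt (le_ciSup (F0.bddAbove_dist (Tz w y).2 (Tz w x).2) k) h' 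
  calc dist (w ^ (y k - x k)) (1 : Circle)
      = dist (w ^ (y k - x k) * w ^ (x k)) (1 * w ^ (x k)) :=
        (circle_dist_mul_right _ _ _).symm
    _ = dist (w ^ (y k)) (w ^ (x k)) := by rw [← zpow_add, sub_add_cancel, one_mul]
    _ < ε := h1

lemma isOpen_ballPre (w : Circle) (x : ℕ →₀ ℤ) (ε : ℝ) :
    IsOpen[TzTop w] (Tz w ⁻¹' (Set.univ ×ˢ Metric.ball (Tz w x).2 ε)) := by
  letI : TopologicalSpace (ℕ →₀ ℤ) := tau
  have h : IsOpen ((Set.univ : Set (ℕ →₀ ℤ)) ×ˢ Metric.ball (Tz w x).2 ε) :=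
    isOpen_univ.prod Metric.isOpen_ball
  exact isOpen_induced h

lemma sMap_continuous : @Continuous sSet (ℕ →₀ ℤ) _ tau sMap := by
  rw [tau, tauGT, continuous_iff_coinduced_le, AddGroupTopology.toTopologicalSpace_sInf]
  refine le_sInf ?_
  rintro t' ⟨t'', ht'', rfl⟩
  exact continuous_iff_coinduced_le.mp ht''

/-- For `z ∈ 𝕊` of infinite order and `a ∈ 𝕊`, `a ≠ 1`, of finite order, the supremum
topology `𝒯_z ∨ 𝒯_{az}` is not compatible with `τ`: some character is continuous for
`𝒯_z ∨ 𝒯_{az}` but not for `τ`. -/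
theorem sup_TzTop_not_compatible (z a : Circle) (hz : ∀ n : ℕ, 0 < n → z ^ n ≠ 1)
    (ha1 : a ≠ 1) (ha : ∃ r : ℕ, 0 < r ∧ a ^ r = 1) :
    ∃ χ : (ℕ →₀ ℤ) → Circle, IsChar χ ∧
      @Continuous _ _ (TzTop z ⊓ TzTop (a * z)) _ χ ∧ ¬ @Continuous _ _ tau _ χ := by
  classical
  obtain ⟨r, hr0, har⟩ := ha
  have hfin : IsOfFinOrder a := isOfFinOrder_iff_pow_eq_one.mpr ⟨r, hr0, har⟩
  set N := orderOf a with hNdef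
  have hN0 : 0 < N := hfin.orderOf_pos
  have hN1 : 1 < N := by
    rcases Nat.lt_or_ge N 2 with h | h
    · exfalso
      have hNe : N = 1 := by omega
      exact ha1 (orderOf_eq_one_iff.mp hNe)
    · omega
  have hNa : a ^ N = 1 := pow_orderOf_eq_one a
  -- the minimal distance δ
  set T : Finset ℕ := (Finset.range N).filter (fun j => a ^ j ≠ 1) with hTdef
  have hT : T.Nonempty := by
    refine ⟨1, Finset.mem_filter.mpr ⟨Finset.mem_range.mpr hN1, ?_⟩⟩
    simpa using ha1
  set δ : ℝ := T.inf' hT (fun j => dist (a ^ j) (1 : Circle)) with hδdef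
  have hδ : 0 < δ := by
    rw [hδdef, Finset.lt_inf'_iff]
    exact fun j hj => dist_pos.mpr (Finset.mem_filter.mp hj).2
  -- the key arithmetic fact
  have key : ∀ d : ℤ, dist (a ^ d) (1 : Circle) < δ → (N : ℤ) ∣ d := by
    intro d hd
    have hNne : (N : ℤ) ≠ 0 := by exact_mod_cast hN0.ne'
    have hmodnn : 0 ≤ d % (N : ℤ) := Int.emod_nonneg d hNne
    have hmodlt : d % (N : ℤ) < N := Int.emod_lt_of_pos d (by exact_mod_cast hN0)
    set j : ℕ := (d % (N : ℤ)).toNat with hjdef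
    have hjcast : ((j : ℤ)) = d % (N : ℤ) := Int.toNat_of_nonneg hmodnn
    have hjN : j < N := by omega
    have hmod : a ^ d = a ^ j := by
      calc a ^ d = a ^ ((N : ℤ) * (d / (N : ℤ)) + d % (N : ℤ)) := by
            rw [Int.mul_ediv_add_emod]
        _ = (a ^ (N : ℤ)) ^ (d / (N : ℤ)) * a ^ (d % (N : ℤ)) := by
            rw [zpow_add, zpow_mul]
        _ = a ^ j := by
            rw [← hjcast, zpow_natCast, zpow_natCast, hNa, one_zpow, one_mul]
    have haj : a ^ j = 1 := by
      by_contra hne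
      have hjT : j ∈ T := Finset.mem_filter.mpr ⟨Finset.mem_range.mpr hjN, hne⟩
      have hle : δ ≤ dist (a ^ j) (1 : Circle) := Finset.inf'_le _ hjT
      rw [hmod] at hd
      linarith
    have hdvd : N ∣ j := orderOf_dvd_of_pow_eq_one haj
    have hj0 : j = 0 := Nat.eq_zero_of_dvd_of_lt hdvd hjN
    have : d % (N : ℤ) = 0 := by omega
    exact Int.dvd_of_emod_eq_zero this
  -- the character
  set χ : (ℕ →₀ ℤ) → Circle := fun x => a ^ (x.sum fun _ v => v) with hχdef
  have hchar : IsChar χ := by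
    intro x y
    show a ^ ((x + y).sum fun _ v => v) = _ * _
    rw [Finsupp.sum_add_index' (fun _ => rfl) (fun _ _ _ => rfl), zpow_add]
  have hone : ∀ x : ℕ →₀ ℤ, (∀ k, (N : ℤ) ∣ x k) → χ x = 1 := by
    intro x hx
    have hdvd : (N : ℤ) ∣ x.sum fun _ v => v := Finset.dvd_sum fun k _ => hx k
    obtain ⟨q, hq⟩ := hdvd
    show a ^ (x.sum fun _ v => v) = 1
    rw [hq, zpow_mul, zpow_natCast, hNa, one_zpow]
  refine ⟨χ, hchar, ?_, ?_⟩
  · -- continuity for the supremum topology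
    letI : TopologicalSpace (ℕ →₀ ℤ) := TzTop z ⊓ TzTop (a * z)
    set ε : ℝ := δ / 2 with hεdef
    have hε : 0 < ε := by positivity
    set U : (ℕ →₀ ℤ) → Set (ℕ →₀ ℤ) := fun x =>
      (Tz z ⁻¹' (Set.univ ×ˢ Metric.ball (Tz z x).2 ε)) ∩
      (Tz (a * z) ⁻¹' (Set.univ ×ˢ Metric.ball (Tz (a * z) x).2 ε)) with hUdef
    have hUopen : ∀ x, IsOpen[TzTop z ⊓ TzTop (a * z)] (U x) := fun x =>
      ((isOpen_ballPre z x ε).mono inf_le_left).inter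
        ((isOpen_ballPre (a * z) x ε).mono inf_le_right)
    have hUmem : ∀ x, x ∈ U x := fun x =>
      ⟨⟨Set.mem_univ _, Metric.mem_ball_self hε⟩, ⟨Set.mem_univ _, Metric.mem_ball_self hε⟩⟩
    have hUχ : ∀ x y, y ∈ U x → χ y = χ x := by
      rintro x y ⟨h1, h2⟩
      have hzk : ∀ k, dist (z ^ (y k - x k)) (1 : Circle) < ε :=
        fun k => dist_tz_lt h1.2 k
      have hazk : ∀ k, dist ((a * z) ^ (y k - x k)) (1 : Circle) < ε :=
        fun k => dist_tz_lt h2.2 k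
      have hdvd : ∀ k, (N : ℤ) ∣ (y - x) k := by
        intro k
        set d : ℤ := y k - x k with hddef
        have e1 : dist (a ^ d) (1 : Circle) = dist ((a * z) ^ d) (z ^ d) := by
          rw [mul_zpow, ← circle_dist_mul_right (a ^ d) 1 (z ^ d), one_mul]
        have e2 : dist (a ^ d) (1 : Circle) < δ := by
          rw [e1]
          calc dist ((a * z) ^ d) (z ^ d)
              ≤ dist ((a * z) ^ d) (1 : Circle) + dist (1 : Circle) (z ^ d) :=
                dist_triangle _ _ _
            _ < ε + ε := add_lt_add (hazk k) (by rw [dist_comm]; exact hzk k)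
            _ = δ := by rw [hεdef]; ring
        have := key d e2
        simpa [Finsupp.sub_apply, ← hddef] using this
      have h0 : χ (y - x) = 1 := hone (y - x) hdvd
      have h3 : χ (x + (y - x)) = χ x * χ (y - x) := hchar x (y - x)
      rw [show x + (y - x) = y from by abel, h0, mul_one] at h3
      exact h3
    rw [continuous_def]
    intro S hS
    have hpre : χ ⁻¹' S = ⋃ x ∈ χ ⁻¹' S, U x := by
      ext y
      simp only [Set.mem_iUnion, Set.mem_preimage]
      constructor
      · intro hy; exact ⟨y, hy, hUmem y⟩
      · rintro ⟨x, hx, hyx⟩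
        rw [hUχ x y hyx]; exact hx
    rw [hpre]
    exact isOpen_biUnion fun x _ => hUopen x
  · -- non-continuity for τ
    intro hc
    have h2 : Continuous (fun x : sSet => χ (sMap x)) :=
      @Continuous.comp sSet (ℕ →₀ ℤ) Circle _ tau _ sMap χ hc sMap_continuous
    set xs : ℕ → sSet := fun n =>
      ⟨1 / ((n + 1 : ℕ) : ℝ), Or.inr ⟨n + 1, n.succ_pos, rfl⟩⟩ with hxsdef
    set x0 : sSet := ⟨0, Or.inl rfl⟩ with hx0def
    have hseq : Tendsto xs atTop (nhds x0) := by
      rw [tendsto_subtype_rng]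
      have := tendsto_one_div_add_atTop_nhds_zero_nat (𝕜 := ℝ)
      refine this.congr fun n => ?_
      rw [hxsdef]
      push_cast
      ring
    have hlim : Tendsto (fun n => χ (sMap (xs n))) atTop (nhds (χ (sMap x0))) :=
      (h2.tendsto x0).comp hseq
    have heval : ∀ n, χ (sMap (xs n)) = a := by
      intro n
      have hne : ((xs n : sSet) : ℝ) ≠ 0 := by
        show (1 : ℝ) / ((n + 1 : ℕ) : ℝ) ≠ 0
        positivity
      have hs : sMap (xs n) = Finsupp.single (n + 1) 1 := by
        rw [sMap, if_neg hne]
        congr 1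
        show ⌈(1 : ℝ) / ((1 : ℝ) / ((n + 1 : ℕ) : ℝ))⌉₊ = n + 1
        rw [one_div_one_div, Nat.ceil_natCast]
      rw [hs]
      show a ^ ((Finsupp.single (n + 1) (1 : ℤ)).sum fun _ v => v) = a
      rw [Finsupp.sum_single_index rfl, zpow_one]
    have heval0 : χ (sMap x0) = 1 := by
      have hs : sMap x0 = 0 := by rw [sMap, if_pos rfl]
      rw [hs]
      show a ^ ((0 : ℕ →₀ ℤ).sum fun _ v => v) = 1
      rw [Finsupp.sum_zero_index, zpow_zero]
    rw [heval0] at hlim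
    have hconst : Tendsto (fun _ : ℕ => a) atTop (nhds (1 : Circle)) :=
      hlim.congr heval
    have : a = 1 := tendsto_nhds_unique tendsto_const_nhds hconst
    exact ha1 this

end
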